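/- Let p be an odd prime, s a positive integer not divisible by p, α an integer, β an integer with gcd(β, s) = 1, and K an integer with 1 ≤ K < p. If Σ_{k=0}^{K} e((k² + αk)/p + βk/s) = 0, then s = 2. -/

import Mathlib

set_option maxHeartbeats 1000000

noncomputable def e (x : ℝ) : ℂ := Complex.exp (2 * Real.pi * Complex.I * x)

open Polynomial IntermediateField Module Finset

private lemma e_int_div (a : ℤ) (m : ℕ) (hm : m ≠ 0) :
    e ((a : ℝ) / m) = Complex.exp (2 * Real.pi * Complex.I / m) ^ a := by
  rw [e, ← Complex.exp_int_mul]
  congr 1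
  have : (m : ℂ) ≠ 0 := by exact_mod_cast hm
  push_cast
  field_simp

private lemma e_add (x y : ℝ) : e (x + y) = e x * e y := by
  rw [e, e, e, ← Complex.exp_add]
  push_cast
  ring_nf

/-- minimal polynomial of `ζp` over `ℚ(ζs)` is the `p`-th cyclotomic polynomial. -/
private lemma min_eq_cyc (p : ℕ) (hp : Nat.Prime p) (s : ℕ) (hs : 0 < s) (hps : ¬ p ∣ s) :
    cyclotomic p ℚ⟮Complex.exp (2 * Real.pi * Complex.I / s)⟯
      = minpoly ℚ⟮Complex.exp (2 * Real.pi * Complex.I / s)⟯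
          (Complex.exp (2 * Real.pi * Complex.I / p)) := by
  set ζp : ℂ := Complex.exp (2 * Real.pi * Complex.I / p) with hζpdef
  set ζs : ℂ := Complex.exp (2 * Real.pi * Complex.I / s) with hζsdef
  have hζp : IsPrimitiveRoot ζp p := Complex.isPrimitiveRoot_exp p hp.pos.ne'
  have hζs : IsPrimitiveRoot ζs s := Complex.isPrimitiveRoot_exp s hs.ne'
  have hints : IsIntegral ℚ ζs := (hζs.isIntegral hs).tower_top
  have hintp : IsIntegral ℚ ζp := (hζp.isIntegral hp.pos).tower_top
  set Qs : IntermediateField ℚ ℂ := ℚ⟮ζs⟯ with hQsdef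
  haveI hfd : FiniteDimensional ℚ Qs := adjoin.finiteDimensional hints
  have hintp' : IsIntegral Qs ζp := hintp.tower_top
  have hpsne : p * s ≠ 0 := Nat.mul_ne_zero hp.pos.ne' hs.ne'
  set ζps : ℂ := Complex.exp (2 * Real.pi * Complex.I / (p * s)) with hζpsdef
  have hζps : IsPrimitiveRoot ζps (p * s) := by
    have := Complex.isPrimitiveRoot_exp (p * s) hpsne
    simpa using this
  have hintps : IsIntegral ℚ ζps :=
    (hζps.isIntegral (Nat.pos_of_ne_zero hpsne)).tower_top
  have hfrs : finrank ℚ Qs = s.totient := by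
    rw [hQsdef, adjoin.finrank hints, ← cyclotomic_eq_minpoly_rat hζs hs,
      natDegree_cyclotomic]
  have hfrps : finrank ℚ ℚ⟮ζps⟯ = (p * s).totient := by
    rw [adjoin.finrank hintps,
      ← cyclotomic_eq_minpoly_rat hζps (Nat.pos_of_ne_zero hpsne), natDegree_cyclotomic]
  set E : IntermediateField Qs ℂ := Qs⟮ζp⟯ with hEdef
  haveI hfdE : FiniteDimensional Qs E := adjoin.finiteDimensional hintp'
  have hfrE : finrank Qs E = (minpoly Qs ζp).natDegree := adjoin.finrank hintp'
  have hζp_mem : ζp ∈ E := mem_adjoin_simple_self Qs ζp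
  have hζs_mem : ζs ∈ E := by
    have : algebraMap Qs ℂ ⟨ζs, mem_adjoin_simple_self ℚ ζs⟩ ∈ E :=
      E.algebraMap_mem _
    simpa using this
  have hζps_mem : ζps ∈ E := by
    have hcop : Nat.Coprime p s := (Nat.Prime.coprime_iff_not_dvd hp).mpr hps
    have : IsCoprime (p : ℤ) (s : ℤ) := Int.isCoprime_iff_gcd_eq_one.mpr hcop
    obtain ⟨u, v, huv⟩ := this
    have h1 : ζps ^ (p : ℕ) = ζs := by
      rw [hζpsdef, hζsdef, ← Complex.exp_nat_mul]
      congr 1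
      have hp0 : (p : ℂ) ≠ 0 := Nat.cast_ne_zero.mpr hp.pos.ne'
      have hs0 : (s : ℂ) ≠ 0 := Nat.cast_ne_zero.mpr hs.ne'
      field_simp
    have h2 : ζps ^ (s : ℕ) = ζp := by
      rw [hζpsdef, hζpdef, ← Complex.exp_nat_mul]
      congr 1
      have hp0 : (p : ℂ) ≠ 0 := Nat.cast_ne_zero.mpr hp.pos.ne'
      have hs0 : (s : ℂ) ≠ 0 := Nat.cast_ne_zero.mpr hs.ne'
      field_simp
    have hne : ζps ≠ 0 := Complex.exp_ne_zero _
    have : ζps = ζs ^ u * ζp ^ v := by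
      rw [← h1, ← h2, ← zpow_natCast ζps p, ← zpow_natCast ζps s, ← zpow_mul, ← zpow_mul,
        ← zpow_add₀ hne]
      rw [show (p : ℤ) * u + (s:ℤ) * v = 1 by linarith [huv]]
      simp
    rw [this]
    exact mul_mem (zpow_mem hζs_mem u) (zpow_mem hζp_mem v)
  haveI : FiniteDimensional ℚ E := FiniteDimensional.trans ℚ Qs E
  have hle : ℚ⟮ζps⟯ ≤ E.restrictScalars ℚ := by
    rw [adjoin_le_iff]
    simpa using hζps_mem
  have hmono : finrank ℚ ℚ⟮ζps⟯ ≤ finrank ℚ (E.restrictScalars ℚ) := by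
    have h2 : Subalgebra.toSubmodule (ℚ⟮ζps⟯.toSubalgebra)
        ≤ Subalgebra.toSubmodule ((E.restrictScalars ℚ).toSubalgebra) := by
      intro x hx; exact hle hx
    haveI hfd2 : Module.Finite ℚ
        (Subalgebra.toSubmodule ((E.restrictScalars ℚ).toSubalgebra)) :=
      ‹FiniteDimensional ℚ E›
    exact Submodule.finrank_mono h2
  have hrs : finrank ℚ (E.restrictScalars ℚ) = finrank ℚ E := rfl
  have htower : finrank ℚ Qs * finrank Qs E = finrank ℚ E :=
    finrank_mul_finrank ℚ Qs E
  have htot : (p * s).totient = p.totient * s.totient :=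
    Nat.totient_mul ((Nat.Prime.coprime_iff_not_dvd hp).mpr hps)
  have hsmul : p.totient * s.totient ≤ s.totient * (minpoly Qs ζp).natDegree := by
    calc p.totient * s.totient = (p*s).totient := htot.symm
    _ = finrank ℚ ℚ⟮ζps⟯ := hfrps.symm
    _ ≤ finrank ℚ E := by rw [← hrs]; exact hmono
    _ = finrank ℚ Qs * finrank Qs E := htower.symm
    _ = s.totient * (minpoly Qs ζp).natDegree := by rw [hfrs, hfrE]
  have hstot : 0 < s.totient := Nat.totient_pos.mpr hs
  have hdeg : p.totient ≤ (minpoly Qs ζp).natDegree := by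
    rw [mul_comm (p.totient)] at hsmul
    exact le_of_mul_le_mul_left hsmul hstot
  have hdvd : minpoly Qs ζp ∣ cyclotomic p Qs := by
    apply minpoly.dvd
    rw [aeval_def, ← eval_map, map_cyclotomic]
    exact (hζp.isRoot_cyclotomic hp.pos).eq_zero ▸ rfl
  exact eq_of_monic_of_dvd_of_natDegree_le (minpoly.monic hintp')
    (cyclotomic.monic p Qs) hdvd (by rw [natDegree_cyclotomic]; exact hdeg)

theorem stmt16 (p : ℕ) (hp : Nat.Prime p) (hodd : Odd p) (s : ℕ) (hs : 0 < s)
    (hps : ¬ p ∣ s) (α β : ℤ) (hβ : Int.gcd β s = 1)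
    (K : ℕ) (hK1 : 1 ≤ K) (hKp : K < p)
    (h : ∑ k ∈ Finset.range (K + 1),
        e ((((k : ℤ) ^ 2 + α * k : ℤ) : ℝ) / p + ((β * k : ℤ) : ℝ) / s) = 0) :
    s = 2 := by
  haveI : Fact (Nat.Prime p) := ⟨hp⟩
  haveI : NeZero p := ⟨hp.pos.ne'⟩
  have hp2 : 2 < p := by
    rcases hp.two_le.lt_or_eq with h' | h'
    · exact h'
    · exfalso; rw [← h'] at hodd; exact (by decide : ¬ Odd 2) hodd
  set ζp : ℂ := Complex.exp (2 * Real.pi * Complex.I / p) with hζpdef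
  set ζs : ℂ := Complex.exp (2 * Real.pi * Complex.I / s) with hζsdef
  have hζp : IsPrimitiveRoot ζp p := Complex.isPrimitiveRoot_exp p hp.pos.ne'
  have hζs : IsPrimitiveRoot ζs s := Complex.isPrimitiveRoot_exp s hs.ne'
  have hζpne : ζp ≠ 0 := Complex.exp_ne_zero _
  have hζsne : ζs ≠ 0 := Complex.exp_ne_zero _
  -- reduce exponents of ζp mod p
  have zpow_p : ∀ a : ℤ, ζp ^ a = ζp ^ (((a : ZMod p)).val) := by
    intro a
    have hdvd : (p:ℤ) ∣ a - ((a : ZMod p).val : ℤ) := by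
      rw [← ZMod.intCast_zmod_eq_zero_iff_dvd]
      push_cast
      simp [ZMod.natCast_val, ZMod.intCast_cast]
    obtain ⟨q, hq⟩ := hdvd
    have ha : a = ((a : ZMod p).val : ℤ) + p * q := by linarith
    conv_lhs => rw [ha]
    rw [zpow_add₀ hζpne, zpow_natCast]
    have : ζp ^ ((p:ℤ) * q) = 1 := by
      rw [zpow_mul, zpow_natCast, hζp.pow_eq_one, one_zpow]
    rw [this, mul_one]
  -- fibers
  set g : ℕ → ZMod p := fun k => (((k:ℤ)^2 + α * k : ℤ) : ZMod p) with hgdef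
  set F : ZMod p → Finset ℕ :=
    fun j => (Finset.range (K+1)).filter (fun k => g k = j) with hFdef
  -- rewrite hypothesis
  have hterm : ∀ k : ℕ,
      e ((((k : ℤ) ^ 2 + α * k : ℤ) : ℝ) / p + ((β * k : ℤ) : ℝ) / s)
        = ζp ^ ((g k).val) * ζs ^ (β * k : ℤ) := by
    intro k
    rw [e_add, e_int_div _ p hp.pos.ne', e_int_div _ s hs.ne', ← hζpdef, ← hζsdef,
      ← zpow_p]
  have hsum : ∑ j : ZMod p, ζp ^ (j.val) * (∑ k ∈ F j, ζs ^ (β * k : ℤ)) = 0 := by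
    rw [← h]
    rw [Finset.sum_congr rfl (fun k _ => hterm k)]
    rw [← Finset.sum_fiberwise_of_maps_to (g := g) (t := Finset.univ)
      (fun i _ => Finset.mem_univ _) (fun k => ζp ^ ((g k).val) * ζs ^ (β * k : ℤ))]
    apply Finset.sum_congr rfl
    intro j _
    rw [Finset.mul_sum]
    apply Finset.sum_congr rfl
    intro k hk
    have : g k = j := (Finset.mem_filter.mp hk).2
    rw [this]
  -- coefficients in Qs = ℚ(ζs)
  set Qs : IntermediateField ℚ ℂ := ℚ⟮ζs⟯ with hQsdef
  set ζsK : Qs := ⟨ζs, mem_adjoin_simple_self ℚ ζs⟩ with hζsKdef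
  set cK : ZMod p → Qs := fun j => ∑ k ∈ F j, ζsK ^ (β * k : ℤ) with hcKdef
  have hcoe : ∀ j, (algebraMap Qs ℂ) (cK j) = ∑ k ∈ F j, ζs ^ (β * k : ℤ) := by
    intro j
    rw [hcKdef]
    simp only [map_sum]
    apply Finset.sum_congr rfl
    intro k _
    rw [map_zpow₀]
    rfl
  set P : Polynomial Qs := ∑ j : ZMod p, C (cK j) * X ^ (j.val) with hPdef
  have hPeval : aeval ζp P = 0 := by
    rw [hPdef, map_sum]
    simp only [map_mul, aeval_C, map_pow, aeval_X]
    rw [← hsum]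
    apply Finset.sum_congr rfl
    intro j _
    rw [hcoe j, mul_comm]
  have hPdeg : P.natDegree ≤ p - 1 := by
    rw [hPdef]
    apply natDegree_sum_le_of_forall_le
    intro j _
    refine le_trans (natDegree_C_mul_le _ _) ?_
    rw [natDegree_X_pow]
    exact Nat.le_sub_one_of_lt (ZMod.val_lt j)
  have hdvdP : cyclotomic p Qs ∣ P := by
    have hmc := min_eq_cyc p hp s hs hps
    rw [← hζsdef, ← hζpdef, ← hQsdef] at hmc
    rw [hmc]
    exact minpoly.dvd Qs ζp hPeval
  have hcoeffP : ∀ j : ZMod p, P.coeff j.val = cK j := by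
    intro j
    rw [hPdef, finset_sum_coeff]
    rw [Finset.sum_eq_single j]
    · simp [coeff_X_pow]
    · intro b _ hbj
      simp only [coeff_C_mul, coeff_X_pow]
      rw [if_neg, mul_zero]
      intro hval
      exact hbj (ZMod.val_injective p hval.symm)
    · intro hj; exact absurd (Finset.mem_univ j) hj
  have hall : ∀ j j' : ZMod p, cK j = cK j' := by
    obtain ⟨q, hq⟩ := hdvdP
    rcases eq_or_ne q 0 with rfl | hq0
    · intro j j'
      rw [← hcoeffP j, ← hcoeffP j', hq, mul_zero, coeff_zero, coeff_zero]
    · have hcyc_ne : (cyclotomic p Qs) ≠ 0 := cyclotomic_ne_zero p Qs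
      have hdq : q.natDegree = 0 := by
        have hmul := natDegree_mul hcyc_ne hq0
        rw [← hq] at hmul
        have h1 : natDegree (cyclotomic p Qs) = p - 1 := by
          rw [natDegree_cyclotomic, Nat.totient_prime hp]
        rw [h1] at hmul
        omega
      have hq' : q = C (q.coeff 0) := eq_C_of_natDegree_eq_zero hdq
      have hcoeffcyc : ∀ m : ℕ, m < p → (cyclotomic p Qs).coeff m = 1 := by
        intro m hm
        rw [cyclotomic_prime Qs p, finset_sum_coeff]
        rw [Finset.sum_eq_single m]
        · simp
        · intro b _ hbm
          simp only [coeff_X_pow]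
          exact if_neg (fun hh => hbm hh.symm)
        · intro hm'; exact absurd (Finset.mem_range.mpr hm) hm'
      intro j j'
      rw [← hcoeffP j, ← hcoeffP j', hq, hq', coeff_mul_C, coeff_mul_C,
        hcoeffcyc _ (ZMod.val_lt j), hcoeffcyc _ (ZMod.val_lt j')]
  -- cast injectivity below p
  have castinj : ∀ a b : ℕ, a < p → b < p → ((a : ZMod p) = (b : ZMod p)) → a = b := by
    intro a b ha hb hab
    have := congrArg ZMod.val hab
    rwa [ZMod.val_cast_of_lt ha, ZMod.val_cast_of_lt hb] at this
  have hgG : ∀ k : ℕ, g k = (k : ZMod p)^2 + (α : ZMod p) * k := by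
    intro k
    rw [hgdef]
    push_cast
    ring
  have hGeq : ∀ x y : ZMod p, x^2 + (α:ZMod p)*x = y^2 + (α:ZMod p)*y →
      y = x ∨ y = -(α:ZMod p) - x := by
    intro x y hxy
    have hfac : (x - y) * (x + y + α) = 0 := by linear_combination hxy
    rcases mul_eq_zero.mp hfac with h1 | h1
    · left; exact (sub_eq_zero.mp h1).symm
    · right; linear_combination h1
  -- there is an empty fiber
  have hempty : ∃ j0 : ZMod p, F j0 = ∅ := by
    by_contra hno
    push_neg at hno
    have hsurj : Function.Surjective (fun x : ZMod p => x^2 + (α:ZMod p)*x) := by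
      intro j
      obtain ⟨k, hk⟩ := hno j
      refine ⟨(k : ZMod p), ?_⟩
      have := (Finset.mem_filter.mp hk).2
      rw [hgG k] at this
      exact this
    have hinj : Function.Injective (fun x : ZMod p => x^2 + (α:ZMod p)*x) :=
      Finite.injective_iff_surjective.mpr hsurj
    have h1 : -(α:ZMod p) = 0 := by
      apply hinj
      show (-(α:ZMod p))^2 + α*(-(α:ZMod p)) = (0:ZMod p)^2 + α*0
      ring
    have h2 : (1 : ZMod p) = -(α:ZMod p) - 1 := by
      apply hinj
      show (1:ZMod p)^2 + α*1 = (-(α:ZMod p)-1)^2 + α*(-(α:ZMod p)-1)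
      ring
    rw [h1] at h2
    have h3 : ((2:ℕ) : ZMod p) = 0 := by push_cast; linear_combination h2
    have h4 : p ∣ 2 := (ZMod.natCast_eq_zero_iff _ _).mp h3
    have := Nat.le_of_dvd (by norm_num) h4
    omega
  have hczero : ∀ j : ZMod p, ∑ k ∈ F j, ζs ^ (β * k : ℤ) = 0 := by
    intro j
    obtain ⟨j0, hj0⟩ := hempty
    have hz : cK j = 0 := by
      rw [hall j j0, hcKdef]
      simp [hj0]
    rw [← hcoe j, hz, map_zero]
  have hltp : ∀ x : ℕ, x ∈ Finset.range (K+1) → x < p := by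
    intro x hx
    have := Finset.mem_range.mp hx
    omega
  -- pairing
  have hpair : ∀ k ∈ Finset.range (K+1), ∃ k' ∈ Finset.range (K+1), k' ≠ k ∧
      ((k' : ZMod p) = -(α:ZMod p) - (k:ZMod p)) ∧
      ζs ^ (β * k : ℤ) + ζs ^ (β * k' : ℤ) = 0 := by
    intro k hk
    have hkF : k ∈ F (g k) := Finset.mem_filter.mpr ⟨hk, rfl⟩
    have hsum0 := hczero (g k)
    have hex : ∃ k' ∈ F (g k), k' ≠ k := by
      by_contra hcon
      push_neg at hcon
      have hsingle : F (g k) = {k} :=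
        Finset.eq_singleton_iff_unique_mem.mpr ⟨hkF, fun x hx => hcon x hx⟩
      rw [hsingle, Finset.sum_singleton] at hsum0
      exact zpow_ne_zero _ hζsne hsum0
    obtain ⟨k', hk'F, hk'ne⟩ := hex
    have hk'r : k' ∈ Finset.range (K+1) := (Finset.mem_filter.mp hk'F).1
    have hkp : k < p := hltp k hk
    have hk'p : k' < p := hltp k' hk'r
    have hgg : g k' = g k := (Finset.mem_filter.mp hk'F).2
    rw [hgG k, hgG k'] at hgg
    rcases hGeq _ _ hgg.symm with h1 | h1
    · exact absurd (castinj _ _ hk'p hkp h1) hk'ne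
    · refine ⟨k', hk'r, hk'ne, h1, ?_⟩
      have hFeq : F (g k) = {k, k'} := by
        apply Finset.ext
        intro x
        constructor
        · intro hx
          have hxp : x < p := hltp x (Finset.mem_filter.mp hx).1
          have hgx : g x = g k := (Finset.mem_filter.mp hx).2
          rw [hgG x, hgG k] at hgx
          rcases hGeq _ _ hgx.symm with h2 | h2
          · exact Finset.mem_insert.mpr (Or.inl (castinj _ _ hxp hkp h2))
          · rw [← h1] at h2
            exact Finset.mem_insert.mpr
              (Or.inr (Finset.mem_singleton.mpr (castinj _ _ hxp hk'p h2)))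
        · intro hx
          rcases Finset.mem_insert.mp hx with rfl | hx
          · exact hkF
          · rw [Finset.mem_singleton.mp hx]; exact hk'F
      rw [hFeq, Finset.sum_pair (Ne.symm hk'ne)] at hsum0
      exact hsum0
  -- apply pairing to k = 0 and k = 1
  obtain ⟨c, hcr, hcne, hcz, hceq⟩ := hpair 0 (Finset.mem_range.mpr (by omega))
  obtain ⟨d, hdr, hdne, hdz, hdeq⟩ := hpair 1 (Finset.mem_range.mpr (by omega))
  have hc1 : 1 ≤ c := Nat.one_le_iff_ne_zero.mpr hcne
  have hcp : c < p := hltp c hcr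
  have hdp : d < p := hltp d hdr
  have hcz0 : (c : ZMod p) = -(α:ZMod p) := by
    rw [hcz]; simp
  have hdz' : (d : ZMod p) = ((c - 1 : ℕ) : ZMod p) := by
    have hcast : ((c - 1 : ℕ) : ZMod p) = -(α:ZMod p) - 1 := by
      push_cast [Nat.cast_sub hc1]
      rw [hcz0]
    rw [hdz, hcast]
    push_cast
    try ring
  have hd : d = c - 1 := castinj _ _ hdp (by omega) hdz'
  have e1 : ζs ^ (β * (c:ℤ)) = -1 := by
    have h0 := hceq
    simp only [Nat.cast_zero, mul_zero, zpow_zero] at h0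
    linear_combination h0
  have e2 : ζs ^ (β * (d:ℤ)) = - ζs ^ (β * ((1:ℕ):ℤ)) := by
    linear_combination hdeq
  have hdc : (d : ℤ) = (c : ℤ) - 1 := by
    rw [hd]
    push_cast [Nat.cast_sub hc1]
    ring
  have key : ζs ^ (2 * β) = 1 := by
    have hsplit : ζs ^ (β * (c:ℤ)) = ζs ^ (β * (d:ℤ)) * ζs ^ (β * ((1:ℕ):ℤ)) := by
      rw [← zpow_add₀ hζsne]
      congr 1
      rw [hdc]
      push_cast
      ring
    rw [e1, e2] at hsplit
    have h2 : ζs ^ (β * ((1:ℕ):ℤ)) * ζs ^ (β * ((1:ℕ):ℤ)) = 1 := by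
      linear_combination hsplit
    rw [← zpow_add₀ hζsne] at h2
    rw [show (2:ℤ) * β = β * ((1:ℕ):ℤ) + β * ((1:ℕ):ℤ) by push_cast; ring]
    exact h2
  have hdvd2 : (s:ℤ) ∣ 2 * β := (hζs.zpow_eq_one_iff_dvd _).mp key
  have hcop : IsCoprime (s:ℤ) β := by
    rw [Int.isCoprime_iff_gcd_eq_one, Int.gcd_comm]
    exact hβ
  have hs2 : (s:ℤ) ∣ 2 := hcop.dvd_of_dvd_mul_right hdvd2
  have hs2' : s ∣ 2 := by exact_mod_cast hs2
  have hs12 : s = 1 ∨ s = 2 := by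
    rcases Nat.le_of_dvd (by norm_num) hs2' with _
    interval_cases s <;> omega
  rcases hs12 with rfl | rfl
  · exfalso
    have hζs1 : ζs = 1 := by
      have := hζs.pow_eq_one
      simpa using this
    rw [hζs1, one_zpow] at e1
    norm_num at e1
  · rfl
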